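/- Suppose A ∈ ℝ^{m×n} admits x̂ with A x̂ < 0 componentwise. Then the quantity H := sup_{‖y‖≤1} min_{x : A x ≤ y} ‖x‖ is finite. -/

import Mathlib

lemma seminorm_sum_le {E ι : Type*} [AddCommGroup E] [Module ℝ E]
    (p : Seminorm ℝ E) (s : Finset ι) (f : ι → E) :
    p (∑ i ∈ s, f i) ≤ ∑ i ∈ s, p (f i) := by
  classical
  induction s using Finset.induction with
  | empty => simp
  | insert _ _ hx ih =>
    rw [Finset.sum_insert hx, Finset.sum_insert hx]
    exact (map_add_le_add p _ _).trans (by linarith)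

lemma seminorm_upper {m : ℕ} (nm : Seminorm ℝ (Fin m → ℝ)) :
    ∀ y : Fin m → ℝ,
      nm y ≤ (∑ i, nm fun j => if i = j then (1:ℝ) else 0) * ‖y‖ := by
  intro y
  calc nm y = nm (∑ i, y i • fun j => if i = j then (1:ℝ) else 0) := by
        rw [← pi_eq_sum_univ y]
    _ ≤ ∑ i, nm (y i • fun j => if i = j then (1:ℝ) else 0) :=
        seminorm_sum_le nm _ _
    _ ≤ ∑ i, (nm fun j => if i = j then (1:ℝ) else 0) * ‖y‖ := by
        refine Finset.sum_le_sum fun i _ => ?_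
        rw [map_smul_eq_mul]
        calc ‖y i‖ * (nm fun j => if i = j then (1:ℝ) else 0)
            ≤ ‖y‖ * (nm fun j => if i = j then (1:ℝ) else 0) :=
              mul_le_mul_of_nonneg_right (norm_le_pi_norm y i) (apply_nonneg _ _)
          _ = (nm fun j => if i = j then (1:ℝ) else 0) * ‖y‖ := mul_comm _ _
    _ = (∑ i, nm fun j => if i = j then (1:ℝ) else 0) * ‖y‖ :=
        (Finset.sum_mul _ _ _).symm

lemma seminorm_cont {m : ℕ} (nm : Seminorm ℝ (Fin m → ℝ)) :
    Continuous fun y : Fin m → ℝ => nm y := by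
  set C : ℝ := ∑ i, nm fun j => if i = j then (1:ℝ) else 0 with hC
  have hC0 : 0 ≤ C := Finset.sum_nonneg fun i _ => apply_nonneg _ _
  refine (LipschitzWith.of_dist_le_mul (K := Real.toNNReal C) fun a b => ?_).continuous
  have h1 : dist (nm a) (nm b) ≤ nm (a - b) := by
    rw [Real.dist_eq]
    exact nm.norm_sub_map_le_sub a b
  have h2 : nm (a - b) ≤ C * ‖a - b‖ := seminorm_upper nm (a - b)
  calc dist (nm a) (nm b) ≤ C * ‖a - b‖ := h1.trans h2
    _ = (Real.toNNReal C : ℝ) * dist a b := by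
        rw [dist_eq_norm, Real.coe_toNNReal C hC0]

lemma seminorm_lower {m : ℕ} (nm : Seminorm ℝ (Fin m → ℝ))
    (hnm : ∀ y, nm y = 0 → y = 0) :
    ∃ ε > 0, ∀ y, ε * ‖y‖ ≤ nm y := by
  rcases Nat.eq_zero_or_pos m with hm | hm
  · refine ⟨1, one_pos, fun y => ?_⟩
    subst hm
    have hy0 : y = 0 := Subsingleton.elim y 0
    rw [hy0, norm_zero, map_zero, one_mul]
  · haveI : Nonempty (Fin m) := ⟨⟨0, hm⟩⟩
    have hsc : IsCompact (Metric.sphere (0 : Fin m → ℝ) 1) := isCompact_sphere _ _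
    have hsne : (Metric.sphere (0 : Fin m → ℝ) 1).Nonempty :=
      NormedSpace.sphere_nonempty.mpr zero_le_one
    obtain ⟨y₀, hy₀, hmin⟩ := hsc.exists_isMinOn hsne (seminorm_cont nm).continuousOn
    have hy₀n : ‖y₀‖ = 1 := by simpa using hy₀
    have hy₀0 : y₀ ≠ 0 := by
      intro h; rw [h] at hy₀n; simp at hy₀n
    have hε : 0 < nm y₀ := by
      rcases (apply_nonneg nm y₀).lt_or_eq with h | h
      · exact h
      · exact absurd (hnm y₀ h.symm) hy₀0
    refine ⟨nm y₀, hε, fun y => ?_⟩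
    rcases eq_or_ne y 0 with rfl | hy
    · simp
    · have hyn : (0:ℝ) < ‖y‖ := norm_pos_iff.mpr hy
      have hu : ‖y‖⁻¹ • y ∈ Metric.sphere (0 : Fin m → ℝ) 1 := by
        simp [norm_smul, abs_of_pos (inv_pos.mpr hyn), inv_mul_cancel₀ hyn.ne']
      have h3 : nm y₀ ≤ nm (‖y‖⁻¹ • y) := hmin hu
      have h2 : nm (‖y‖⁻¹ • y) = ‖y‖⁻¹ * nm y := by
        rw [map_smul_eq_mul, Real.norm_eq_abs, abs_of_pos (inv_pos.mpr hyn)]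
      rw [h2] at h3
      calc nm y₀ * ‖y‖ ≤ (‖y‖⁻¹ * nm y) * ‖y‖ :=
            mul_le_mul_of_nonneg_right h3 hyn.le
        _ = nm y := by field_simp

/-- If `A xhat < 0` for some `xhat`, then `H = sup_{‖y‖ ≤ 1} inf_{A x ≤ y} ‖x‖`
is finite, i.e. the set of inner minimum values is nonempty and bounded above. -/
theorem stmt4 {m n : ℕ} (A : Matrix (Fin m) (Fin n) ℝ)
    (nn : Seminorm ℝ (Fin n → ℝ)) (nm : Seminorm ℝ (Fin m → ℝ))
    (hnn : ∀ x, nn x = 0 → x = 0) (hnm : ∀ y, nm y = 0 → y = 0)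
    (xhat : Fin n → ℝ) (hxhat : ∀ i, A.mulVec xhat i < 0) :
    {r | ∃ y : Fin m → ℝ, nm y ≤ 1 ∧
        r = sInf {s | ∃ x, (∀ i, A.mulVec x i ≤ y i) ∧ s = nn x}}.Nonempty ∧
    BddAbove {r | ∃ y : Fin m → ℝ, nm y ≤ 1 ∧
        r = sInf {s | ∃ x, (∀ i, A.mulVec x i ≤ y i) ∧ s = nn x}} := by
  constructor
  · exact ⟨_, 0, by simp, rfl⟩
  · obtain ⟨ε, hε, hlow⟩ := seminorm_lower nm hnm
    set t : ℝ := ∑ i, (1 / ε) / (-(A.mulVec xhat i)) with ht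
    refine ⟨nn (t • xhat), fun r hr => ?_⟩
    obtain ⟨y, hy, rfl⟩ := hr
    have hyb : ‖y‖ ≤ 1 / ε := by
      rw [le_div_iff₀ hε, mul_comm]
      exact (hlow y).trans hy
    have hfeas : ∀ i, A.mulVec (t • xhat) i ≤ y i := by
      intro i
      have hci : A.mulVec xhat i < 0 := hxhat i
      have hti : (1 / ε) / (-(A.mulVec xhat i)) ≤ t := by
        refine Finset.single_le_sum (f := fun j => (1 / ε) / (-(A.mulVec xhat j)))
          (fun j _ => div_nonneg (by positivity) (by linarith [hxhat j]))
          (Finset.mem_univ i)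
      have h1 : A.mulVec (t • xhat) i = t * A.mulVec xhat i := by
        simp [Matrix.mulVec_smul]
      rw [h1]
      have h2 : t * A.mulVec xhat i ≤
          ((1 / ε) / (-(A.mulVec xhat i))) * A.mulVec xhat i :=
        mul_le_mul_of_nonpos_right hti hci.le
      have h3 : ((1 / ε) / (-(A.mulVec xhat i))) * A.mulVec xhat i = -(1 / ε) := by
        have hne : A.mulVec xhat i ≠ 0 := hci.ne
        field_simp
      have h4 : -(1 / ε) ≤ y i := by
        have h5 : |y i| ≤ ‖y‖ := by
          simpa using norm_le_pi_norm y i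
        linarith [neg_abs_le (y i)]
      linarith
    have hbdd : BddBelow {s | ∃ x, (∀ i, A.mulVec x i ≤ y i) ∧ s = nn x} :=
      ⟨0, fun s ⟨x, _, hs⟩ => hs ▸ apply_nonneg nn x⟩
    exact csInf_le hbdd ⟨t • xhat, hfeas, rfl⟩
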